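/- arXiv:2501.06000 — 3 statements merged into one kernel-verified Lean document; each statement's English description precedes it below -/
import Mathlib

section
/- Let {P_ij}_{1≤i,j≤N} be a partially cycle-consistent family of partial matchings between N views of sizes n_1,…,n_N. Then for all i, j, k, P_ij P_jk P_ki = I_ijki, where I_ijki ∈ {0,1}^{n_i×n_i} is the diagonal matrix defined by I_ijki[a,d] = 1 if a = d and there exist b, c with P_ij[a,b] = P_jk[b,c] = P_ki[c,d] = 1, and I_ijki[a,d] = 0 otherwise. In particular the triple product has all off-diagonal entries equal to 0 and every diagonal entry equal to 0 or 1. -/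
open Matrix

/-- A 0/1 matrix (over ℕ) is a partial permutation matrix if every entry is 0 or 1,
every row contains at most one entry equal to 1, and every column contains at most
one entry equal to 1. -/
def IsPartialPerm {n m : ℕ} (P : Matrix (Fin n) (Fin m) ℕ) : Prop :=
  (∀ a b, P a b = 0 ∨ P a b = 1) ∧
  (∀ a b b', P a b = 1 → P a b' = 1 → b = b') ∧
  (∀ a a' b, P a b = 1 → P a' b = 1 → a = a')

/-- A family of matchings `P i j ∈ {0,1}^{n i × n j}` between `N` views is partially
cycle-consistent if each `P i j` is a partial permutation matrix, `P i i` is the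
identity, `P j i = (P i j)ᵀ`, and matching from `i` to `j` and then from `j` to `k`
implies the direct match from `i` to `k`. -/
structure IsPartiallyCycleConsistent {N : ℕ} (n : Fin N → ℕ)
    (P : ∀ i j : Fin N, Matrix (Fin (n i)) (Fin (n j)) ℕ) : Prop where
  partialPerm : ∀ i j, IsPartialPerm (P i j)
  refl : ∀ i, P i i = 1
  symm : ∀ i j, P j i = (P i j)ᵀ
  trans : ∀ i j k, ∀ (a : Fin (n i)) (c : Fin (n k)),
    (∃ b, P i j a b = 1 ∧ P j k b c = 1) → P i k a c = 1


open Classical in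
/-- For a partially cycle-consistent family, `P_ij P_jk P_ki = I_ijki`, where `I_ijki`
is the diagonal matrix with `I_ijki[a,d] = 1` iff `a = d` and there exist `b, c` with
`P_ij[a,b] = P_jk[b,c] = P_ki[c,d] = 1`.  In particular the triple product has all
off-diagonal entries equal to 0 and every diagonal entry equal to 0 or 1. -/
theorem triple_cycle_eq_mask {N : ℕ} (n : Fin N → ℕ)
    (P : ∀ i j : Fin N, Matrix (Fin (n i)) (Fin (n j)) ℕ)
    (hP : IsPartiallyCycleConsistent n P) :
    ∀ i j k : Fin N,
      (P i j * P j k * P k i =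
        Matrix.of fun a d : Fin (n i) =>
          if a = d ∧ ∃ b c, P i j a b = 1 ∧ P j k b c = 1 ∧ P k i c d = 1
          then (1 : ℕ) else 0) ∧
      (∀ a d : Fin (n i), a ≠ d → (P i j * P j k * P k i) a d = 0) ∧
      (∀ a : Fin (n i),
        (P i j * P j k * P k i) a a = 0 ∨ (P i j * P j k * P k i) a a = 1) := by
  intro i j k
  have h01ij := (hP.partialPerm i j).1
  have hrowij := (hP.partialPerm i j).2.1
  have h01jk := (hP.partialPerm j k).1
  have hrowjk := (hP.partialPerm j k).2.1
  have h01ki := (hP.partialPerm k i).1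
  have key : ∀ a d : Fin (n i), (P i j * P j k * P k i) a d =
      if a = d ∧ ∃ b c, P i j a b = 1 ∧ P j k b c = 1 ∧ P k i c d = 1 then 1 else 0 := by
    intro a d
    rw [Matrix.mul_apply]
    simp only [Matrix.mul_apply, Finset.sum_mul]
    by_cases h : ∃ b c, P i j a b = 1 ∧ P j k b c = 1 ∧ P k i c d = 1
    · obtain ⟨b0, c0, hb, hc, hd⟩ := h
      have had : a = d := by
        have h1 : P i k a c0 = 1 := hP.trans i j k a c0 ⟨b0, hb, hc⟩
        have h2 : P i k d c0 = 1 := by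
          rw [hP.symm k i, Matrix.transpose_apply]; exact hd
        exact (hP.partialPerm i k).2.2 a d c0 h1 h2
      rw [if_pos ⟨had, b0, c0, hb, hc, hd⟩]
      have hinner : ∀ c, (∑ b, P i j a b * P j k b c * P k i c d)
          = if c = c0 then 1 else 0 := by
        intro c
        by_cases hcc : c = c0
        · subst hcc
          rw [if_pos rfl]
          rw [Finset.sum_eq_single b0]
          · rw [hb, hc, hd]
          · intro b _ hbne
            rcases h01ij a b with h0 | h1
            · rw [h0]; ring
            · exact absurd (hrowij a b b0 h1 hb) hbne
          · intro hmem; exact absurd (Finset.mem_univ b0) hmem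
        · rw [if_neg hcc]
          apply Finset.sum_eq_zero
          intro b _
          rcases h01ij a b with h0 | h1
          · rw [h0]; ring
          · have hbb : b = b0 := hrowij a b b0 h1 hb
            subst hbb
            rcases h01jk b c with h0' | h1'
            · rw [h0']; ring
            · exact absurd (hrowjk b c c0 h1' hc) hcc
      calc (∑ c, ∑ b, P i j a b * P j k b c * P k i c d)
          = ∑ c, if c = c0 then 1 else 0 := by
            exact Finset.sum_congr rfl fun c _ => hinner c
        _ = 1 := by simp
    · rw [if_neg (fun hcon => h hcon.2)]
      apply Finset.sum_eq_zero
      intro c _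
      apply Finset.sum_eq_zero
      intro b _
      rcases h01ij a b with h0 | h1
      · rw [h0]; ring
      · rcases h01jk b c with h0' | h1'
        · rw [h0']; ring
        · rcases h01ki c d with h0'' | h1''
          · rw [h0'']; ring
          · exact absurd ⟨b, c, h1, h1', h1''⟩ h
  refine ⟨?_, ?_, ?_⟩
  · ext a d
    rw [key a d]; rfl
  · intro a d had
    rw [key a d, if_neg (fun hcon => had hcon.1)]
  · intro a
    rw [key a a]
    split
    · right; rfl
    · left; rfl
end

section
/- Let {P_ij}_{1≤i,j≤N} be a partially cycle-consistent family of partial matchings between N views of sizes n_1,…,n_N. Then for all i, j, k and all indices a, c: (P_ij P_jk)[a,c] = 1 if and only if P_ik[a,c] = 1 and there exists b with P_ij[a,b] = 1. Equivalently, P_ij P_jk = I_iji P_ik, where I_iji is the diagonal matrix with I_iji[a,a] = 1 exactly when row a of P_ij contains a 1. In other words, matching from view i through view j to view k agrees with the direct matching from view i to view k exactly on those objects of view i that are visible in view j. -/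
open Matrix

lemma mul_entry_eq {N : ℕ} (n : Fin N → ℕ)
    (P : ∀ i j : Fin N, Matrix (Fin (n i)) (Fin (n j)) ℕ)
    (hP : IsPartiallyCycleConsistent n P) (i j k : Fin N)
    (a : Fin (n i)) (c : Fin (n k)) :
    (P i j * P j k) a c = if ∃ b, P i j a b = 1 ∧ P j k b c = 1 then 1 else 0 := by
  rw [Matrix.mul_apply]
  split_ifs with h
  · obtain ⟨b0, hb1, hb2⟩ := h
    rw [Finset.sum_eq_single b0]
    · rw [hb1, hb2]
    · intro b _ hb
      rcases (hP.partialPerm i j).1 a b with h0 | h1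
      · rw [h0, zero_mul]
      · exact absurd ((hP.partialPerm i j).2.1 a b b0 h1 hb1) hb
    · intro h; exact absurd (Finset.mem_univ b0) h
  · apply Finset.sum_eq_zero
    intro b _
    rcases (hP.partialPerm i j).1 a b with h0 | h1
    · rw [h0, zero_mul]
    rcases (hP.partialPerm j k).1 b c with h0 | h2
    · rw [h0, mul_zero]
    · exact absurd ⟨b, h1, h2⟩ h

/-- For a partially cycle-consistent family: `(P_ij P_jk)[a,c] = 1` iff
`P_ik[a,c] = 1` and row `a` of `P_ij` contains a 1; equivalently
`P_ij P_jk = I_iji P_ik` where `I_iji` is the diagonal matrix with `I_iji[a,a] = 1`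
exactly when row `a` of `P_ij` contains a 1.  Matching from view `i` through view `j`
to view `k` agrees with the direct matching from `i` to `k` exactly on objects of
view `i` visible in view `j`. -/
theorem through_view_eq_masked_direct {N : ℕ} (n : Fin N → ℕ)
    (P : ∀ i j : Fin N, Matrix (Fin (n i)) (Fin (n j)) ℕ)
    (hP : IsPartiallyCycleConsistent n P) :
    ∀ i j k : Fin N,
      (∀ (a : Fin (n i)) (c : Fin (n k)),
        (P i j * P j k) a c = 1 ↔ (P i k a c = 1 ∧ ∃ b, P i j a b = 1)) ∧
      P i j * P j k =
        (Matrix.of fun a c : Fin (n i) =>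
          if a = c ∧ ∃ b, P i j a b = 1 then (1 : ℕ) else 0) * P i k := by
  intro i j k
  have key : ∀ (a : Fin (n i)) (b : Fin (n j)) (c : Fin (n k)),
      P i k a c = 1 → P i j a b = 1 → P j k b c = 1 := by
    intro a b c hik hij
    have hji : P j i b a = 1 := by rw [hP.symm i j]; exact hij
    exact hP.trans j i k b c ⟨a, hji, hik⟩
  have iff1 : ∀ (a : Fin (n i)) (c : Fin (n k)),
      (P i j * P j k) a c = 1 ↔ (P i k a c = 1 ∧ ∃ b, P i j a b = 1) := by
    intro a c
    rw [mul_entry_eq n P hP i j k a c]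
    split_ifs with h
    · obtain ⟨b, hb1, hb2⟩ := h
      simp only [true_iff]
      exact ⟨hP.trans i j k a c ⟨b, hb1, hb2⟩, ⟨b, hb1⟩⟩
    · simp only [zero_ne_one, false_iff]
      rintro ⟨hik, b, hij⟩
      exact h ⟨b, hij, key a b c hik hij⟩
  refine ⟨iff1, ?_⟩
  ext a c
  rw [mul_entry_eq n P hP i j k a c, Matrix.mul_apply]
  rw [Finset.sum_eq_single a]
  · simp only [Matrix.of_apply, true_and, if_pos rfl]
    by_cases hC : ∃ b, P i j a b = 1
    · rw [if_pos hC]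
      obtain ⟨b, hb⟩ := hC
      rcases (hP.partialPerm i k).1 a c with h0 | h1
      · rw [h0, mul_zero, if_neg]
        rintro ⟨b', hb1, hb2⟩
        have := hP.trans i j k a c ⟨b', hb1, hb2⟩
        omega
      · rw [h1, if_pos ⟨b, hb, key a b c h1 hb⟩, one_mul]
    · rw [if_neg hC, zero_mul, if_neg]
      rintro ⟨b, hb1, _⟩
      exact hC ⟨b, hb1⟩
  · intro d _ hd
    simp only [Matrix.of_apply]
    rw [if_neg, zero_mul]
    rintro ⟨rfl, -⟩
    exact hd rfl
  · intro h; exact absurd (Finset.mem_univ a) h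
end

section
/- Let {P_ij}_{1≤i,j≤N} be a partially cycle-consistent family of partial matchings between N views of sizes n_1,…,n_N. Then for all i, j, k, I_ijki = I_iji I_iki, i.e., for every index a of view i: there exist b, c with P_ij[a,b] = P_jk[b,c] = P_ki[c,a] = 1 if and only if there exists b with P_ij[a,b] = 1 and there exists c with P_ik[a,c] = 1. In words, the triple cycle through object a exists exactly when a is visible in both view j and view k. -/
open Matrix

open Classical in
/-- For a partially cycle-consistent family, `I_ijki = I_iji * I_iki`: for every index
`a` of view `i`, there exist `b, c` with `P_ij[a,b] = P_jk[b,c] = P_ki[c,a] = 1` iff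
there exists `b` with `P_ij[a,b] = 1` and there exists `c` with `P_ik[a,c] = 1`.
The triple cycle through object `a` exists exactly when `a` is visible in both view
`j` and view `k`. -/
theorem triple_mask_eq_pairwise_masks {N : ℕ} (n : Fin N → ℕ)
    (P : ∀ i j : Fin N, Matrix (Fin (n i)) (Fin (n j)) ℕ)
    (hP : IsPartiallyCycleConsistent n P) :
    ∀ i j k : Fin N,
      ((Matrix.of fun a d : Fin (n i) =>
          if a = d ∧ ∃ b c, P i j a b = 1 ∧ P j k b c = 1 ∧ P k i c d = 1
          then (1 : ℕ) else 0) =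
        (Matrix.of fun a c : Fin (n i) =>
          if a = c ∧ ∃ b, P i j a b = 1 then (1 : ℕ) else 0) *
        (Matrix.of fun a c : Fin (n i) =>
          if a = c ∧ ∃ b, P i k a b = 1 then (1 : ℕ) else 0)) ∧
      (∀ a : Fin (n i),
        (∃ b c, P i j a b = 1 ∧ P j k b c = 1 ∧ P k i c a = 1) ↔
          ((∃ b, P i j a b = 1) ∧ (∃ c, P i k a c = 1))) := by
  intro i j k
  have key : ∀ a : Fin (n i),
      (∃ b c, P i j a b = 1 ∧ P j k b c = 1 ∧ P k i c a = 1) ↔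
        ((∃ b, P i j a b = 1) ∧ (∃ c, P i k a c = 1)) := by
    intro a
    constructor
    · rintro ⟨b, c, h1, h2, h3⟩
      exact ⟨⟨b, h1⟩, ⟨c, hP.trans i j k a c ⟨b, h1, h2⟩⟩⟩
    · rintro ⟨⟨b, h1⟩, ⟨c, h2⟩⟩
      have hji : P j i b a = 1 := by rw [hP.symm i j]; exact h1
      have hjk : P j k b c = 1 := hP.trans j i k b c ⟨a, hji, h2⟩
      have hki : P k i c a = 1 := by rw [hP.symm i k]; exact h2
      exact ⟨b, c, h1, hjk, hki⟩
  refine ⟨?_, key⟩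
  ext a d
  simp only [Matrix.mul_apply, Matrix.of_apply]
  by_cases had : a = d
  · subst had
    rw [Finset.sum_eq_single a]
    · have := key a
      by_cases h1 : ∃ b, P i j a b = 1 <;> by_cases h2 : ∃ c, P i k a c = 1 <;>
        simp only [h1, h2, and_true, and_false, true_and, if_true, if_false,
          eq_self_iff_true, mul_one, mul_zero, one_mul, if_neg, iff_true, iff_false] at this ⊢ <;>
        first
        | exact if_pos this
        | exact if_neg this
    · intro e _ he
      simp [Ne.symm he]
    · simp
  · rw [Finset.sum_eq_zero]
    · simp [had]
    · intro e _
      by_cases hae : a = e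
      · subst hae; simp [had]
      · simp [hae]
end
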